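/- Let φ, ψ : ℝ → ℂ be Schwartz functions. Then ∫_ℝ H(𝓕φ)(t)·ψ(t) dt = ∫_ℝ H(φ)(t)·(𝓕ψ)(t) dt, where both integrals converge absolutely. (This expresses that the conductor operator H commutes with the Fourier transform.) -/

import Mathlib

open MeasureTheory Complex

/-- The Fourier transform on `ℝ`: `𝓕f(ξ) = ∫ f(x)·e^{−2πixξ} dx`. -/
noncomputable def fourierT (f : ℝ → ℂ) (ξ : ℝ) : ℂ :=
  ∫ x : ℝ, f x * Complex.exp (-(2 * Real.pi * Complex.I * x * ξ))

/-- The inverse Fourier transform on `ℝ`: `𝓕⁻¹f(x) = ∫ f(ξ)·e^{2πixξ} dξ`. -/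
noncomputable def fourierInv (f : ℝ → ℂ) (x : ℝ) : ℂ :=
  ∫ ξ : ℝ, f ξ * Complex.exp (2 * Real.pi * Complex.I * x * ξ)

/-- The conductor operator
`H(φ)(t) = log|t|·φ(t) + ∫ log|ξ|·(𝓕⁻¹φ)(ξ)·e^{−2πitξ} dξ`. -/
noncomputable def condOp (φ : ℝ → ℂ) (t : ℝ) : ℂ :=
  (Real.log |t| : ℂ) * φ t +
    ∫ ξ : ℝ, (Real.log |ξ| : ℂ) * fourierInv φ ξ *
      Complex.exp (-(2 * Real.pi * Complex.I * t * ξ))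

open scoped FourierTransform

lemma fourierT_eq (f : ℝ → ℂ) : fourierT f = 𝓕 f := by
  funext ξ
  rw [Real.fourier_real_eq_integral_exp_smul]
  unfold fourierT
  have h : ∀ x : ℝ, f x * Complex.exp (-(2 * Real.pi * Complex.I * x * ξ))
      = Complex.exp (↑(-2 * Real.pi * x * ξ) * Complex.I) • f x := by
    intro x
    rw [smul_eq_mul, mul_comm]
    congr 1
    push_cast
    ring
  simp_rw [h]

lemma fourierInv_eq (f : ℝ → ℂ) : fourierInv f = 𝓕⁻ f := by
  funext x
  rw [Real.fourierInv_eq_fourier_neg,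
    Real.fourier_real_eq_integral_exp_smul]
  unfold fourierInv
  have h : ∀ ξ : ℝ, f ξ * Complex.exp (2 * Real.pi * Complex.I * x * ξ)
      = Complex.exp (↑(-2 * Real.pi * ξ * (-x)) * Complex.I) • f ξ := by
    intro ξ
    rw [smul_eq_mul, mul_comm]
    congr 1
    push_cast
    ring
  simp_rw [h]

lemma innerL_cont : Continuous fun p : ℝ × ℝ => (innerₗ ℝ) p.1 p.2 := continuous_inner

lemma mulFormula {f g : ℝ → ℂ} (hf : Integrable f) (hg : Integrable g) :
    ∫ ξ : ℝ, 𝓕 f ξ * g ξ = ∫ x : ℝ, f x * 𝓕 g x := by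
  have hflip : (innerₗ ℝ).flip = innerₗ ℝ := by
    apply LinearMap.ext; intro x; apply LinearMap.ext; intro y
    simpa using real_inner_comm y x
  have h := VectorFourier.integral_bilin_fourierIntegral_eq_flip
    (E := ℂ) (F := ℂ) (G := ℂ) (f := f) (g := g) (L := innerₗ ℝ)
    (μ := volume) (ν := volume)
    (ContinuousLinearMap.mul ℂ ℂ) Real.continuous_fourierChar innerL_cont hf hg
  rw [hflip] at h
  simpa [Real.fourier_eq, VectorFourier.fourierIntegral] using h

lemma schwartz_bound (f : SchwartzMap ℝ ℂ) : ∃ C, 0 ≤ C ∧ ∀ x, ‖f x‖ ≤ C := by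
  obtain ⟨C, hC0, hC⟩ := f.decay 0 0
  have h : ∀ x, ‖f x‖ ≤ C := by
    intro x
    have := hC x
    simpa using this
  exact ⟨C, le_trans (norm_nonneg (f 0)) (h 0), h⟩

lemma integrableOn_abs_rpow :
    IntegrableOn (fun t : ℝ => |t| ^ (-(1/2) : ℝ)) (Set.Ioc (-1 : ℝ) 1) := by
  have h1 : IntervalIntegrable (fun t : ℝ => t ^ (-(1/2) : ℝ)) volume 0 1 :=
    intervalIntegral.intervalIntegrable_rpow' (by norm_num)
  have h1' : IntervalIntegrable (fun t : ℝ => |t| ^ (-(1/2) : ℝ)) volume 0 1 := by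
    rw [intervalIntegrable_iff] at h1 ⊢
    refine h1.congr_fun (fun x hx => ?_) measurableSet_uIoc
    rw [Set.uIoc_of_le (by norm_num : (0:ℝ) ≤ 1)] at hx
    rw [abs_of_pos hx.1]
  have h2' : IntervalIntegrable (fun t : ℝ => |t| ^ (-(1/2) : ℝ)) volume (-1) 0 := by
    have := (IntervalIntegrable.iff_comp_neg).mp h1'
    simp only [abs_neg, neg_zero] at this
    exact this.symm
  have h3 := h2'.trans h1'
  rw [intervalIntegrable_iff, Set.uIoc_of_le (by norm_num : (-1:ℝ) ≤ 1)] at h3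
  exact h3

lemma log_mul_integrable {h : ℝ → ℂ} (hm : AEStronglyMeasurable h volume)
    {C : ℝ} (hC : ∀ t, ‖h t‖ ≤ C)
    (hint : Integrable (fun t : ℝ => ‖t‖ * ‖h t‖)) :
    Integrable (fun t : ℝ => (Real.log |t| : ℂ) * h t) := by
  have hmeas : AEStronglyMeasurable (fun t : ℝ => (Real.log |t| : ℂ) * h t) volume :=
    ((Complex.measurable_ofReal.comp
      (Real.measurable_log.comp measurable_abs)).aestronglyMeasurable).mul hm
  have hlogbound : ∀ t : ℝ, t ≠ 0 → |t| ≤ 1 →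
      |(Real.log |t|)| ≤ 2 * |t| ^ (-(1/2) : ℝ) := by
    intro t ht ht1
    have habs : 0 < |t| := abs_pos.mpr ht
    have hlogle : Real.log |t| ≤ 0 := Real.log_nonpos habs.le ht1
    rw [abs_of_nonpos hlogle, ← Real.log_inv]
    calc Real.log |t|⁻¹ ≤ (|t|⁻¹) ^ (1/2 : ℝ) / (1/2 : ℝ) :=
          Real.log_le_rpow_div (by positivity) (by norm_num)
      _ = 2 * |t| ^ (-(1/2) : ℝ) := by
          rw [Real.inv_rpow (abs_nonneg t), ← Real.rpow_neg (abs_nonneg t)]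
          ring
  have h1 : IntegrableOn (fun t : ℝ => (Real.log |t| : ℂ) * h t) (Set.Ioc (-1 : ℝ) 1) := by
    have hC0 : 0 ≤ C := le_trans (norm_nonneg _) (hC 0)
    have hne : ∀ᵐ t : ℝ ∂(volume.restrict (Set.Ioc (-1 : ℝ) 1)), t ≠ 0 := by
      refine ae_restrict_of_ae ?_
      have hs : {t : ℝ | ¬ t ≠ 0} = {0} := by ext t; simp
      rw [ae_iff, hs]
      exact measure_singleton 0
    refine Integrable.mono' (integrableOn_abs_rpow.const_mul (C * 2)) hmeas.restrict ?_
    filter_upwards [hne, ae_restrict_mem measurableSet_Ioc] with t ht hmem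
    have habs1 : |t| ≤ 1 := abs_le.mpr ⟨hmem.1.le, hmem.2⟩
    calc ‖(Real.log |t| : ℂ) * h t‖ = |(Real.log |t|)| * ‖h t‖ := by
          rw [norm_mul, Complex.norm_real, Real.norm_eq_abs]
      _ ≤ (2 * |t| ^ (-(1/2) : ℝ)) * C :=
          mul_le_mul (hlogbound t ht habs1) (hC t) (norm_nonneg _) (by positivity)
      _ = C * 2 * |t| ^ (-(1/2) : ℝ) := by ring
  have h2 : IntegrableOn (fun t : ℝ => (Real.log |t| : ℂ) * h t) (Set.Ioc (-1 : ℝ) 1)ᶜ := by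
    refine Integrable.mono' hint.restrict hmeas.restrict ?_
    filter_upwards [ae_restrict_mem measurableSet_Ioc.compl] with t htc
    have h1t : 1 ≤ |t| := by
      simp only [Set.mem_compl_iff, Set.mem_Ioc, not_and_or, not_lt, not_le] at htc
      rcases htc with hle | hlt
      · rw [abs_of_nonpos (by linarith)]; linarith
      · rw [abs_of_pos (by linarith)]; linarith
    have hlog : |(Real.log |t|)| ≤ |t| := by
      rw [_root_.abs_of_nonneg (Real.log_nonneg h1t)]
      calc Real.log |t| ≤ |t| - 1 := Real.log_le_sub_one_of_pos (by linarith)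
        _ ≤ |t| := by linarith
    calc ‖(Real.log |t| : ℂ) * h t‖ = |(Real.log |t|)| * ‖h t‖ := by
          rw [norm_mul, Complex.norm_real, Real.norm_eq_abs]
      _ ≤ |t| * ‖h t‖ := mul_le_mul_of_nonneg_right hlog (norm_nonneg _)
      _ = ‖t‖ * ‖h t‖ := by rw [Real.norm_eq_abs]
  have h3 := h1.union h2
  rw [Set.union_compl_self] at h3
  exact integrableOn_univ.mp h3

lemma fourier_cont {f : ℝ → ℂ} (hf : Integrable f) : Continuous (𝓕 f) :=
  VectorFourier.fourierIntegral_continuous Real.continuous_fourierChar innerL_cont hf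

lemma fourier_bound (f : ℝ → ℂ) (t : ℝ) :
    ‖𝓕 f t‖ ≤ ∫ x : ℝ, ‖f x‖ :=
  VectorFourier.norm_fourierIntegral_le_integral_norm _ _ _ _ _

lemma condOp_eq (f : ℝ → ℂ) : condOp f = fun t => (Real.log |t| : ℂ) * f t +
    𝓕 (fun ξ => (Real.log |ξ| : ℂ) * fourierInv f ξ) t := by
  funext t
  rw [condOp, ← fourierT_eq]
  congr 1
  unfold fourierT
  congr 1
  funext ξ
  congr 2
  ring

/-- The conductor operator commutes with the Fourier transform:
for Schwartz `φ, ψ`, `∫ H(𝓕φ)(t)·ψ(t) dt = ∫ H(φ)(t)·(𝓕ψ)(t) dt`,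
both integrals converging absolutely. -/
theorem conductor_commutes_with_fourier (φ ψ : SchwartzMap ℝ ℂ) :
    Integrable (fun t : ℝ => condOp (fourierT fun s => φ s) t * ψ t) ∧
    Integrable (fun t : ℝ => condOp (fun s => φ s) t * fourierT (fun s => ψ s) t) ∧
    (∫ t : ℝ, condOp (fourierT fun s => φ s) t * ψ t) =
      ∫ t : ℝ, condOp (fun s => φ s) t * fourierT (fun s => ψ s) t := by
  classical
  set Φ : SchwartzMap ℝ ℂ := 𝓕 φ with hΦdef
  have hΦ : ⇑Φ = 𝓕 (⇑φ) := rfl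
  set Ψ : SchwartzMap ℝ ℂ := 𝓕 ψ with hΨdef
  have hΨ : ⇑Ψ = 𝓕 (⇑ψ) := rfl
  have hφi : Integrable (⇑φ) volume := φ.integrable
  have hψi : Integrable (⇑ψ) volume := ψ.integrable
  have hΦi : Integrable (⇑Φ) volume := Φ.integrable
  have hΨi : Integrable (⇑Ψ) volume := Ψ.integrable
  have hinvφ : 𝓕⁻ (𝓕 ⇑φ) = ⇑φ :=
    Continuous.fourierInv_fourier_eq φ.continuous hφi (hΦ ▸ hΦi)
  have hinvψ : 𝓕⁻ (𝓕 ⇑ψ) = ⇑ψ :=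
    Continuous.fourierInv_fourier_eq ψ.continuous hψi (hΨ ▸ hΨi)
  -- the two auxiliary functions
  set g₁ : ℝ → ℂ := fun ξ => (Real.log |ξ| : ℂ) * φ ξ with hg₁def
  set g₂ : ℝ → ℂ := fun ξ => (Real.log |ξ| : ℂ) * Φ (-ξ) with hg₂def
  obtain ⟨Cφ, hCφ0, hCφ⟩ := schwartz_bound φ
  obtain ⟨CΦ, hCΦ0, hCΦ⟩ := schwartz_bound Φ
  obtain ⟨Cψ, hCψ0, hCψ⟩ := schwartz_bound ψ
  obtain ⟨CΨ, hCΨ0, hCΨ⟩ := schwartz_bound Ψ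
  have hφpow : Integrable (fun t : ℝ => ‖t‖ * ‖φ t‖) := by
    simpa using φ.integrable_pow_mul (μ := volume) 1
  have hΦpow : Integrable (fun t : ℝ => ‖t‖ * ‖Φ t‖) := by
    simpa using Φ.integrable_pow_mul (μ := volume) 1
  have hψpow : Integrable (fun t : ℝ => ‖t‖ * ‖ψ t‖) := by
    simpa using ψ.integrable_pow_mul (μ := volume) 1
  have hΨpow : Integrable (fun t : ℝ => ‖t‖ * ‖Ψ t‖) := by
    simpa using Ψ.integrable_pow_mul (μ := volume) 1
  have hg₁i : Integrable g₁ :=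
    log_mul_integrable φ.continuous.aestronglyMeasurable hCφ hφpow
  have hg₂i : Integrable g₂ := by
    have h0 : Integrable (fun t : ℝ => (Real.log |t| : ℂ) * Φ t) :=
      log_mul_integrable Φ.continuous.aestronglyMeasurable hCΦ hΦpow
    have h1 : Integrable (fun t : ℝ => (Real.log |(-t)| : ℂ) * Φ (-t)) := h0.comp_neg
    have h2 : g₂ = fun t : ℝ => (Real.log |(-t)| : ℂ) * Φ (-t) := by
      funext t; rw [abs_neg]
    rw [h2]; exact h1
  -- rewriting the two condOp expressions
  have e1 : (fun ξ : ℝ => (Real.log |ξ| : ℂ) * fourierInv (𝓕 ⇑φ) ξ) = g₁ := by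
    funext ξ
    rw [fourierInv_eq, hinvφ]
  have e2 : (fun ξ : ℝ => (Real.log |ξ| : ℂ) * fourierInv (⇑φ) ξ) = g₂ := by
    funext ξ
    rw [fourierInv_eq, Real.fourierInv_eq_fourier_neg, ← hΦ]
  have hcond1 : condOp (fourierT fun s => φ s)
      = fun t => (Real.log |t| : ℂ) * Φ t + 𝓕 g₁ t := by
    rw [show (fun s => φ s) = ⇑φ from rfl, fourierT_eq, condOp_eq, e1, ← hΦ]
  have hcond2 : condOp (fun s => φ s)
      = fun t => (Real.log |t| : ℂ) * φ t + 𝓕 g₂ t := by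
    rw [show (fun s => φ s) = ⇑φ from rfl, condOp_eq, e2]
  -- integrability of the four pieces
  have int1a : Integrable (fun t : ℝ => (Real.log |t| : ℂ) * Φ t * ψ t) := by
    have hb : ∀ t : ℝ, ‖Φ t * ψ t‖ ≤ CΦ * Cψ := by
      intro t
      rw [norm_mul]
      exact mul_le_mul (hCΦ t) (hCψ t) (norm_nonneg _) hCΦ0
    have hpow : Integrable (fun t : ℝ => ‖t‖ * ‖Φ t * ψ t‖) := by
      refine Integrable.mono' (hψpow.const_mul CΦ)
        (continuous_norm.mul (Φ.continuous.mul ψ.continuous).norm).aestronglyMeasurable ?_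
      filter_upwards with t
      rw [Real.norm_of_nonneg (by positivity), norm_mul]
      calc ‖t‖ * (‖Φ t‖ * ‖ψ t‖) ≤ ‖t‖ * (CΦ * ‖ψ t‖) := by
            have := mul_le_mul_of_nonneg_right (hCΦ t) (norm_nonneg (ψ t))
            exact mul_le_mul_of_nonneg_left this (norm_nonneg t)
        _ = CΦ * (‖t‖ * ‖ψ t‖) := by ring
    have := log_mul_integrable (h := fun t => Φ t * ψ t)
      (Φ.continuous.aestronglyMeasurable.mul ψ.continuous.aestronglyMeasurable) hb hpow
    simpa [mul_assoc] using this
  have int2a : Integrable (fun t : ℝ => (Real.log |t| : ℂ) * φ t * Ψ t) := by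
    have hb : ∀ t : ℝ, ‖φ t * Ψ t‖ ≤ Cφ * CΨ := by
      intro t
      rw [norm_mul]
      exact mul_le_mul (hCφ t) (hCΨ t) (norm_nonneg _) hCφ0
    have hpow : Integrable (fun t : ℝ => ‖t‖ * ‖φ t * Ψ t‖) := by
      refine Integrable.mono' (hφpow.const_mul CΨ)
        (continuous_norm.mul (φ.continuous.mul Ψ.continuous).norm).aestronglyMeasurable ?_
      filter_upwards with t
      rw [Real.norm_of_nonneg (by positivity), norm_mul]
      calc ‖t‖ * (‖φ t‖ * ‖Ψ t‖) ≤ ‖t‖ * (‖φ t‖ * CΨ) := by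
            have := mul_le_mul_of_nonneg_left (hCΨ t) (norm_nonneg (φ t))
            exact mul_le_mul_of_nonneg_left this (norm_nonneg t)
        _ = CΨ * (‖t‖ * ‖φ t‖) := by ring
    have := log_mul_integrable (h := fun t => φ t * Ψ t)
      (φ.continuous.aestronglyMeasurable.mul Ψ.continuous.aestronglyMeasurable) hb hpow
    simpa [mul_assoc] using this
  have int1b : Integrable (fun t : ℝ => 𝓕 g₁ t * ψ t) :=
    Integrable.bdd_mul hψi (fourier_cont hg₁i).aestronglyMeasurable
      (c := ∫ x : ℝ, ‖g₁ x‖) (Filter.Eventually.of_forall fun t => fourier_bound g₁ t)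
  have int2b : Integrable (fun t : ℝ => 𝓕 g₂ t * Ψ t) :=
    Integrable.bdd_mul hΨi (fourier_cont hg₂i).aestronglyMeasurable
      (c := ∫ x : ℝ, ‖g₂ x‖) (Filter.Eventually.of_forall fun t => fourier_bound g₂ t)
  -- total integrability
  have intL : Integrable (fun t : ℝ => condOp (fourierT fun s => φ s) t * ψ t) := by
    rw [hcond1]
    have := int1a.add int1b
    refine this.congr ?_
    filter_upwards with t
    simp only [Pi.add_apply]
    ring
  have intR : Integrable (fun t : ℝ => condOp (fun s => φ s) t * fourierT (fun s => ψ s) t) := by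
    rw [hcond2, show (fun s => ψ s) = ⇑ψ from rfl, fourierT_eq, ← hΨ]
    have := int2a.add int2b
    refine this.congr ?_
    filter_upwards with t
    simp only [Pi.add_apply]
    ring
  refine ⟨intL, intR, ?_⟩
  -- the two key integral identities
  have hΨΨ : ∀ x : ℝ, 𝓕 (⇑Ψ) x = ψ (-x) := by
    intro x
    rw [hΨ]
    have h := Real.fourierInv_eq_fourier_neg (𝓕 ⇑ψ) (-x)
    rw [neg_neg] at h
    rw [← h, hinvψ]
  have key1 : ∫ t : ℝ, 𝓕 g₁ t * ψ t
      = ∫ x : ℝ, (Real.log |x| : ℂ) * φ x * Ψ x := by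
    rw [mulFormula hg₁i hψi]
    congr 1
  have key2 : ∫ t : ℝ, (Real.log |t| : ℂ) * Φ t * ψ t
      = ∫ t : ℝ, 𝓕 g₂ t * Ψ t := by
    have step1 : ∫ t : ℝ, 𝓕 g₂ t * Ψ t
        = ∫ x : ℝ, g₂ x * 𝓕 (⇑Ψ) x := mulFormula hg₂i hΨi
    have step2 : ∫ x : ℝ, g₂ x * 𝓕 (⇑Ψ) x
        = ∫ x : ℝ, (fun y : ℝ => (Real.log |y| : ℂ) * Φ y * ψ y) (-x) := by
      congr 1
      funext x
      rw [hΨΨ, hg₂def]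
      simp [abs_neg]
    have step3 : ∫ x : ℝ, (fun y : ℝ => (Real.log |y| : ℂ) * Φ y * ψ y) (-x)
        = ∫ t : ℝ, (Real.log |t| : ℂ) * Φ t * ψ t := by
      have := integral_neg_eq_self (fun y : ℝ => (Real.log |y| : ℂ) * Φ y * ψ y) volume
      simpa using this
    rw [step1, step2, step3]
  -- assemble
  calc ∫ t : ℝ, condOp (fourierT fun s => φ s) t * ψ t
      = ∫ t : ℝ, ((Real.log |t| : ℂ) * Φ t * ψ t + 𝓕 g₁ t * ψ t) := by
        rw [hcond1]
        congr 1
        funext t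
        ring
    _ = (∫ t : ℝ, (Real.log |t| : ℂ) * Φ t * ψ t)
        + ∫ t : ℝ, 𝓕 g₁ t * ψ t := integral_add int1a int1b
    _ = (∫ t : ℝ, 𝓕 g₂ t * Ψ t)
        + ∫ x : ℝ, (Real.log |x| : ℂ) * φ x * Ψ x := by rw [key1, key2]
    _ = (∫ x : ℝ, (Real.log |x| : ℂ) * φ x * Ψ x)
        + ∫ t : ℝ, 𝓕 g₂ t * Ψ t := by ring
    _ = ∫ t : ℝ, ((Real.log |t| : ℂ) * φ t * Ψ t + 𝓕 g₂ t * Ψ t) :=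
        (integral_add int2a int2b).symm
    _ = ∫ t : ℝ, condOp (fun s => φ s) t * fourierT (fun s => ψ s) t := by
        rw [hcond2, show (fun s => ψ s) = ⇑ψ from rfl, fourierT_eq, ← hΨ]
        congr 1
        funext t
        ring
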